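/- Let p be an odd prime and a,b,c,d indeterminates over ℚ. Set Δ = a^p d^p − b^p c^p, and define the 2×2 matrix f_p = ((u,v),(w,u)) with u = ((a^p d^p + b^p c^p)(ad+bc)^p − 2^{p+1}a^p b^p c^p d^p)/Δ^2, v = b^p d^p(2^p(a^p d^p+b^p c^p) − 2(ad+bc)^p)/Δ^2, w = a^p c^p(2^p(a^p d^p+b^p c^p) − 2(ad+bc)^p)/Δ^2. Then f_p equals the matrix product (X^{(p)T} q X^{(p)})^{-1}·(X^T q X)^{(p)}, where X = ((a,b),(c,d)), q = ((0,1),(1,0)), X^{(p)} denotes the entrywise p-th power, and T denotes transpose. -/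

import Mathlib

open MvPolynomial Matrix

noncomputable section

/-- The rational function field `E = K(a,b,c,d)`, realized as the fraction field of the
polynomial ring in the four indeterminates `a, b, c, d`. -/
abbrev E (K : Type) [Field K] := FractionRing (MvPolynomial (Fin 4) K)

/-- The transcendental generator `a` of `E = K(a,b,c,d)`. -/
def va (K : Type) [Field K] : E K := algebraMap (MvPolynomial (Fin 4) K) (E K) (X 0)
/-- The transcendental generator `b` of `E = K(a,b,c,d)`. -/
def vb (K : Type) [Field K] : E K := algebraMap (MvPolynomial (Fin 4) K) (E K) (X 1)
/-- The transcendental generator `c` of `E = K(a,b,c,d)`. -/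
def vc (K : Type) [Field K] : E K := algebraMap (MvPolynomial (Fin 4) K) (E K) (X 2)
/-- The transcendental generator `d` of `E = K(a,b,c,d)`. -/
def vd (K : Type) [Field K] : E K := algebraMap (MvPolynomial (Fin 4) K) (E K) (X 3)

/-- The core computation: the matrix identity holds over any field once we know
`a^p d^p - b^p c^p ≠ 0`. -/
lemma key_stmt15 {F : Type*} [Field F] (p : ℕ) (a b c d u v w : F)
    (hΔ : a ^ p * d ^ p - b ^ p * c ^ p ≠ 0)
    (hu : u = ((a ^ p * d ^ p + b ^ p * c ^ p) * (a * d + b * c) ^ p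
          - 2 ^ (p + 1) * a ^ p * b ^ p * c ^ p * d ^ p)
        / (a ^ p * d ^ p - b ^ p * c ^ p) ^ 2)
    (hv : v = b ^ p * d ^ p * (2 ^ p * (a ^ p * d ^ p + b ^ p * c ^ p)
          - 2 * (a * d + b * c) ^ p) / (a ^ p * d ^ p - b ^ p * c ^ p) ^ 2)
    (hw : w = a ^ p * c ^ p * (2 ^ p * (a ^ p * d ^ p + b ^ p * c ^ p)
          - 2 * (a * d + b * c) ^ p) / (a ^ p * d ^ p - b ^ p * c ^ p) ^ 2) :
    (!![u, v; w, u] : Matrix (Fin 2) (Fin 2) F)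
      = ((Matrix.map !![a, b; c, d] (fun z => z ^ p))ᵀ * !![0, 1; 1, 0] * (Matrix.map !![a, b; c, d] (fun z => z ^ p)))⁻¹
        * (Matrix.map (!![a, b; c, d]ᵀ * !![0, 1; 1, 0] * !![a, b; c, d]) (fun z => z ^ p)) := by
  have hmap : Matrix.map !![a, b; c, d] (fun z => z ^ p)
      = !![a ^ p, b ^ p; c ^ p, d ^ p] := by
    ext i j; fin_cases i <;> fin_cases j <;> simp
  have ht : (!![a ^ p, b ^ p; c ^ p, d ^ p] : Matrix (Fin 2) (Fin 2) F)ᵀ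
      = !![a ^ p, c ^ p; b ^ p, d ^ p] := by
    ext i j; fin_cases i <;> fin_cases j <;> simp
  have hM : (Matrix.map !![a, b; c, d] (fun z => z ^ p))ᵀ * !![0, 1; 1, 0]
        * (Matrix.map !![a, b; c, d] (fun z => z ^ p))
      = !![2 * (a ^ p * c ^ p), a ^ p * d ^ p + b ^ p * c ^ p;
           a ^ p * d ^ p + b ^ p * c ^ p, 2 * (b ^ p * d ^ p)] := by
    rw [hmap, ht, Matrix.mul_fin_two, Matrix.mul_fin_two]
    ext i j; fin_cases i <;> fin_cases j <;> simp <;> ring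
  have hN : Matrix.map (!![a, b; c, d]ᵀ * !![0, 1; 1, 0] * !![a, b; c, d]) (fun z => z ^ p)
      = !![2 ^ p * (a ^ p * c ^ p), (a * d + b * c) ^ p;
           (a * d + b * c) ^ p, 2 ^ p * (b ^ p * d ^ p)] := by
    have ht2 : !![a, b; c, d]ᵀ = !![a, c; b, d] := by
      ext i j; fin_cases i <;> fin_cases j <;> simp
    rw [ht2, Matrix.mul_fin_two, Matrix.mul_fin_two]
    ext i j; fin_cases i <;> fin_cases j <;> simp [← mul_pow] <;> ring_nf
  rw [hM, hN]
  set A := a ^ p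
  set B := b ^ p
  set C := c ^ p
  set D := d ^ p
  set S := (a * d + b * c) ^ p with hS
  set T := (2 : F) ^ p with hT
  have h2 : (2 : F) ^ (p + 1) = 2 * T := by rw [hT, pow_succ]; ring
  rw [h2] at hu
  have hdet : (!![2 * (A * C), A * D + B * C; A * D + B * C, 2 * (B * D)] :
      Matrix (Fin 2) (Fin 2) F).det ≠ 0 := by
    rw [Matrix.det_fin_two_of]
    have : 2 * (A * C) * (2 * (B * D)) - (A * D + B * C) * (A * D + B * C)
        = -((A * D - B * C) ^ 2) := by ring
    rw [this]
    exact neg_ne_zero.mpr (pow_ne_zero _ hΔ)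
  have hunit : IsUnit (!![2 * (A * C), A * D + B * C; A * D + B * C, 2 * (B * D)] :
      Matrix (Fin 2) (Fin 2) F).det := isUnit_iff_ne_zero.mpr hdet
  have hmul : (!![2 * (A * C), A * D + B * C; A * D + B * C, 2 * (B * D)] :
        Matrix (Fin 2) (Fin 2) F) * !![u, v; w, u]
      = !![T * (A * C), S; S, T * (B * D)] := by
    rw [Matrix.mul_fin_two]
    ext i j
    fin_cases i <;> fin_cases j <;>
      · simp only [Matrix.of_apply, Matrix.cons_val', Matrix.cons_val_zero,
          Matrix.cons_val_one, Matrix.head_cons, Matrix.head_fin_const, Matrix.empty_val',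
          Matrix.cons_val_fin_one, Fin.zero_eta, Fin.mk_one]
        simp only [hu, hv, hw]
        rw [mul_div_assoc', mul_div_assoc', ← add_div, div_eq_iff (pow_ne_zero 2 hΔ)]
        ring
  calc (!![u, v; w, u] : Matrix (Fin 2) (Fin 2) F)
      = (!![2 * (A * C), A * D + B * C; A * D + B * C, 2 * (B * D)]⁻¹
        * !![2 * (A * C), A * D + B * C; A * D + B * C, 2 * (B * D)]) * !![u, v; w, u] := by
        rw [Matrix.nonsing_inv_mul _ hunit, one_mul]
    _ = _ := by rw [mul_assoc, hmul]

/-- For an odd prime `p` and `X = ((a,b),(c,d))`, `q = ((0,1),(1,0))` over `ℚ(a,b,c,d)`,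
the matrix `f_p = ((u,v),(w,u))` with the explicit entries `u, v, w` equals
`(X^{(p)ᵀ} q X^{(p)})⁻¹ · (Xᵀ q X)^{(p)}`, where `M^{(p)}` denotes the entrywise `p`-th
power and `ᵀ` the transpose. -/
theorem stmt15 (p : ℕ) (hp : p.Prime) (hodd : Odd p)
    (a b c d : E ℚ) (ha : a = va ℚ) (hb : b = vb ℚ) (hc : c = vc ℚ) (hd : d = vd ℚ)
    (u v w : E ℚ)
    (hu : u = ((a ^ p * d ^ p + b ^ p * c ^ p) * (a * d + b * c) ^ p
          - 2 ^ (p + 1) * a ^ p * b ^ p * c ^ p * d ^ p)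
        / (a ^ p * d ^ p - b ^ p * c ^ p) ^ 2)
    (hv : v = b ^ p * d ^ p * (2 ^ p * (a ^ p * d ^ p + b ^ p * c ^ p)
          - 2 * (a * d + b * c) ^ p) / (a ^ p * d ^ p - b ^ p * c ^ p) ^ 2)
    (hw : w = a ^ p * c ^ p * (2 ^ p * (a ^ p * d ^ p + b ^ p * c ^ p)
          - 2 * (a * d + b * c) ^ p) / (a ^ p * d ^ p - b ^ p * c ^ p) ^ 2) :
    (!![u, v; w, u] : Matrix (Fin 2) (Fin 2) (E ℚ))
      = ((Matrix.map !![a, b; c, d] (fun z => z ^ p))ᵀ * !![0, 1; 1, 0] * (Matrix.map !![a, b; c, d] (fun z => z ^ p)))⁻¹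
        * (Matrix.map (!![a, b; c, d]ᵀ * !![0, 1; 1, 0] * !![a, b; c, d]) (fun z => z ^ p)) := by
  have hΔ : a ^ p * d ^ p - b ^ p * c ^ p ≠ 0 := by
    have hpoly : ((X 0) ^ p * (X 3) ^ p - (X 1) ^ p * (X 2) ^ p : MvPolynomial (Fin 4) ℚ) ≠ 0 := by
      intro h
      have := congrArg (eval (![1, 0, 0, 1] : Fin 4 → ℚ)) h
      simp [zero_pow hp.ne_zero] at this
    have hne : algebraMap (MvPolynomial (Fin 4) ℚ) (E ℚ)
        ((X 0) ^ p * (X 3) ^ p - (X 1) ^ p * (X 2) ^ p) ≠ 0 :=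
      (map_ne_zero_iff _ (IsFractionRing.injective _ _)).mpr hpoly
    rw [ha, hb, hc, hd]
    simpa [va, vb, vc, vd, map_sub, _root_.map_mul, map_pow] using hne
  exact key_stmt15 p a b c d u v w hΔ hu hv hw
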